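/- If d is a distance on X, then the power set P(X) is d_H-sup-complete: for every family 𝒴 of subsets of X that is d_H-final (inf_{Y∈𝒴} d_H(Z,Y) = 0 for all Z ∈ 𝒴), the union ⋃𝒴 satisfies d_H(Z, ⋃𝒴) = 0 for all Z ∈ 𝒴 and d_H(⋃𝒴, W) ≤ sup_{Y∈𝒴} d_H(Y,W) for all subsets W ⊆ X. -/

import Mathlib

open ENNReal Filter Set

/-- `P(X)` is `d_H`-sup-complete: for any `d_H`-final family `𝒴`, the union `⋃₀ 𝒴`
is a `d_H`-supremum of `𝒴`. Here `d_H(Z,Y) = ⨆ z ∈ Z, ⨅ y ∈ Y, d z y`. -/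
theorem hausdorff_supComplete {X : Type*} (d : X → X → ℝ≥0∞)
    (hd : ∀ x y z, d x z ≤ d x y + d y z) (𝒴 : Set (Set X))
    (hfin : ∀ Z ∈ 𝒴, (⨅ Y ∈ 𝒴, ⨆ z ∈ Z, ⨅ y ∈ Y, d z y) = 0) :
    (∀ Z ∈ 𝒴, (⨆ z ∈ Z, ⨅ y ∈ ⋃₀ 𝒴, d z y) = 0) ∧
    ∀ W : Set X, (⨆ z ∈ ⋃₀ 𝒴, ⨅ w ∈ W, d z w) ≤ ⨆ Y ∈ 𝒴, ⨆ z ∈ Y, ⨅ w ∈ W, d z w := by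
  constructor
  · intro Z hZ
    simp only [ENNReal.iSup_eq_zero]
    intro z hz
    refine le_antisymm ?_ zero_le
    have h : (⨅ y ∈ ⋃₀ 𝒴, d z y) ≤ ⨅ Y ∈ 𝒴, ⨆ z' ∈ Z, ⨅ y ∈ Y, d z' y := by
      refine le_iInf₂ fun Y hY => ?_
      refine le_trans (iInf_le_iInf_of_subset fun y hy => ⟨Y, hY, hy⟩) ?_
      exact le_iSup₂_of_le z hz le_rfl
    rw [hfin Z hZ] at h
    exact h
  · intro W
    refine iSup₂_le fun z hz => ?_
    obtain ⟨Y, hY, hzY⟩ := hz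
    exact le_iSup₂_of_le Y hY (le_iSup₂_of_le z hzY le_rfl)
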